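/- Let ((c̄,b̄),x̄) be in the graph of the argmin mapping S and assume the Slater constraint qualification holds at b̄. Then lip S((c̄,b̄),x̄) ≥ lip S_D((c̄,b̄_D),x̄) for every D ∈ M_{c̄,b̄}(x̄) (as elements of [0,+∞]); in particular, lip S((c̄,b̄),x̄) ≥ max over D ∈ M_{c̄,b̄}(x̄) of lip S_D((c̄,b̄_D),x̄), and if S_D fails the Aubin property at ((c̄,b̄_D),x̄) for some D ∈ M_{c̄,b̄}(x̄), then S fails the Aubin property at ((c̄,b̄),x̄). -/

import Mathlib

open Matrix Set Topology Filter
open scoped ENNReal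

namespace QPLip

variable {n m : ℕ}

/-- The quadratic objective function `(1/2) xᵀQx + cᵀx`. -/
noncomputable def obj (Q : Matrix (Fin n) (Fin n) ℝ) (c x : Fin n → ℝ) : ℝ :=
  (1 / 2) * (x ⬝ᵥ Q.mulVec x) + c ⬝ᵥ x

/-- The feasible set `F(b) = {x : aᵢ'x ≤ bᵢ, i = 1,…,m}`. -/
def Feas (A : Matrix (Fin m) (Fin n) ℝ) (b : Fin m → ℝ) : Set (Fin n → ℝ) :=
  {x | ∀ i, A i ⬝ᵥ x ≤ b i}

/-- The argmin (optimal set) mapping `S(c,b)`. -/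
noncomputable def argminSet (Q : Matrix (Fin n) (Fin n) ℝ) (A : Matrix (Fin m) (Fin n) ℝ)
    (c : Fin n → ℝ) (b : Fin m → ℝ) : Set (Fin n → ℝ) :=
  {x | x ∈ Feas A b ∧ ∀ y ∈ Feas A b, obj Q c x ≤ obj Q c y}

/-- The active index set `I_b(x)`. -/
def activeIdx (A : Matrix (Fin m) (Fin n) ℝ) (b : Fin m → ℝ) (x : Fin n → ℝ) : Set (Fin m) :=
  {i | A i ⬝ᵥ x = b i}

/-- Conical convex hull of `{aᵢ : i ∈ D}` (equal to `{0}` when `D = ∅`). -/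
def coneOf (A : Matrix (Fin m) (Fin n) ℝ) (D : Finset (Fin m)) : Set (Fin n → ℝ) :=
  {v | ∃ lam : Fin m → ℝ, (∀ i, 0 ≤ lam i) ∧ v = ∑ i ∈ D, lam i • A i}

/-- The family `M_{c,b}(x)` of minimal KKT sets of indices at `((c,b),x)`. -/
def MinKKT (Q : Matrix (Fin n) (Fin n) ℝ) (A : Matrix (Fin m) (Fin n) ℝ)
    (c : Fin n → ℝ) (b : Fin m → ℝ) (x : Fin n → ℝ) : Set (Finset (Fin m)) :=
  {D | ↑D ⊆ activeIdx A b x ∧ -(Q.mulVec x + c) ∈ coneOf A D ∧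
    ∀ D' : Finset (Fin m), D' ⊂ D → -(Q.mulVec x + c) ∉ coneOf A D'}

/-- The extended family `L_{c,b}(x)` of KKT subsets of indices. -/
def ExtKKT (Q : Matrix (Fin n) (Fin n) ℝ) (A : Matrix (Fin m) (Fin n) ℝ)
    (c : Fin n → ℝ) (b : Fin m → ℝ) (x : Fin n → ℝ) : Set (Finset (Fin m)) :=
  {D | ↑D ⊆ activeIdx A b x ∧ LinearIndependent ℝ (fun i : D => A i.1) ∧
    -(Q.mulVec x + c) ∈ coneOf A D}

/-- Slater constraint qualification at `b`. -/
def Slater (A : Matrix (Fin m) (Fin n) ℝ) (b : Fin m → ℝ) : Prop :=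
  ∃ y : Fin n → ℝ, ∀ i, A i ⬝ᵥ y < b i

/-- The Nürnberger condition at `((c,b),x)`. -/
def NCond (Q : Matrix (Fin n) (Fin n) ℝ) (A : Matrix (Fin m) (Fin n) ℝ)
    (c : Fin n → ℝ) (b : Fin m → ℝ) (x : Fin n → ℝ) : Prop :=
  Slater A b ∧ ∀ D : Finset (Fin m), ↑D ⊆ activeIdx A b x →
    -(Q.mulVec x + c) ∈ coneOf A D → n ≤ D.card

/-- The submatrix `A_D` of `A` formed by the rows indexed by `D`. -/
def subA (A : Matrix (Fin m) (Fin n) ℝ) (D : Finset (Fin m)) : Matrix D (Fin n) ℝ :=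
  Matrix.of fun i j => A i.1 j

/-- The KKT matrix `M_D = [[Q, A_Dᵀ],[A_D, 0]]`. -/
noncomputable def MD (Q : Matrix (Fin n) (Fin n) ℝ) (A : Matrix (Fin m) (Fin n) ℝ)
    (D : Finset (Fin m)) : Matrix (Fin n ⊕ D) (Fin n ⊕ D) ℝ :=
  Matrix.fromBlocks Q (subA A D)ᵀ (subA A D) 0

/-- The feasible set of the subproblem `P_D`. -/
def FeasD (A : Matrix (Fin m) (Fin n) ℝ) (D : Finset (Fin m)) (β : D → ℝ) :
    Set (Fin n → ℝ) :=
  {x | ∀ i : D, A i.1 ⬝ᵥ x ≤ β i}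

/-- The optimal set mapping `S_D(c,β)` of the subproblem `P_D(c,β)`. -/
noncomputable def argminD (Q : Matrix (Fin n) (Fin n) ℝ) (A : Matrix (Fin m) (Fin n) ℝ)
    (D : Finset (Fin m)) (c : Fin n → ℝ) (β : D → ℝ) : Set (Fin n → ℝ) :=
  {x | x ∈ FeasD A D β ∧ ∀ y ∈ FeasD A D β, obj Q c x ≤ obj Q c y}

/-- Restriction `b_D` of the right-hand side `b` to the indices in `D`. -/
def restr (b : Fin m → ℝ) (D : Finset (Fin m)) : D → ℝ := fun i => b i.1

/-- `nrm` is a norm on `ℝⁿ`. -/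
structure IsNorm (nrm : (Fin n → ℝ) → ℝ) : Prop where
  definite : ∀ x, nrm x = 0 → x = 0
  smul : ∀ (t : ℝ) (x : Fin n → ℝ), nrm (t • x) = |t| * nrm x
  triangle : ∀ x y, nrm (x + y) ≤ nrm x + nrm y

/-- The dual norm `‖c‖_* = sup {|c'y| : ‖y‖ ≤ 1}`. -/
noncomputable def dualNrm (nrm : (Fin n → ℝ) → ℝ) (c : Fin n → ℝ) : ℝ :=
  sSup {r | ∃ y, nrm y ≤ 1 ∧ r = |c ⬝ᵥ y|}

/-- Distance (with respect to the norm `nrm`) from a point to a set, with `d(x,∅) = +∞`. -/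
noncomputable def dSet (nrm : (Fin n → ℝ) → ℝ) (x : Fin n → ℝ) (S : Set (Fin n → ℝ)) :
    ℝ≥0∞ :=
  ⨅ s ∈ S, ENNReal.ofReal (nrm (x - s))

/-- The distance `max {‖c₁-c₂‖_*, ‖β₁-β₂‖_∞}` in a parameter space `ℝⁿ × ℝ^ι`. -/
noncomputable def pDist (nrm : (Fin n → ℝ) → ℝ) {ι : Type} [Fintype ι]
    (p q : (Fin n → ℝ) × (ι → ℝ)) : ℝ :=
  max (dualNrm nrm (p.1 - q.1)) ‖p.2 - q.2‖

/-- The Aubin property of a set-valued mapping `G` at `(pbar, xbar)`, where the parameter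
space carries the distance `pd` and `ℝⁿ` the norm `nrm`. -/
def AubinAt {P : Type*} [TopologicalSpace P] (nrm : (Fin n → ℝ) → ℝ) (pd : P → P → ℝ)
    (G : P → Set (Fin n → ℝ)) (pbar : P) (xbar : Fin n → ℝ) : Prop :=
  ∃ κ : ℝ, 0 ≤ κ ∧ ∃ V ∈ 𝓝 pbar, ∃ U ∈ 𝓝 xbar,
    ∀ p1 ∈ V, ∀ p2 ∈ V, ∀ x2 ∈ G p2 ∩ U,
      dSet nrm x2 (G p1) ≤ ENNReal.ofReal (κ * pd p2 p1)

/-- The Lipschitz modulus of `G` at `(pbar, xbar)`: the infimum in `[0,+∞]` of all Lipschitz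
constants `κ` in the definition of the Aubin property (`+∞` if the Aubin property fails). -/
noncomputable def lipMod {P : Type*} [TopologicalSpace P] (nrm : (Fin n → ℝ) → ℝ)
    (pd : P → P → ℝ) (G : P → Set (Fin n → ℝ)) (pbar : P) (xbar : Fin n → ℝ) : ℝ≥0∞ :=
  ⨅ κ ∈ {κ : ℝ | 0 ≤ κ ∧ ∃ V ∈ 𝓝 pbar, ∃ U ∈ 𝓝 xbar,
    ∀ p1 ∈ V, ∀ p2 ∈ V, ∀ x2 ∈ G p2 ∩ U,
      dSet nrm x2 (G p1) ≤ ENNReal.ofReal (κ * pd p2 p1)}, ENNReal.ofReal κ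

/-- Strong Lipschitz stability of `G` at `pbar`: single-valuedness in a neighborhood of
`pbar` together with Lipschitz continuity there. -/
def StrongLipStable {P : Type*} [TopologicalSpace P] (nrm : (Fin n → ℝ) → ℝ)
    (pd : P → P → ℝ) (G : P → Set (Fin n → ℝ)) (pbar : P) : Prop :=
  ∃ V ∈ 𝓝 pbar, (∀ p ∈ V, ∃! x, x ∈ G p) ∧
    ∃ κ : ℝ, 0 ≤ κ ∧ ∀ p1 ∈ V, ∀ p2 ∈ V, ∀ x1 ∈ G p1, ∀ x2 ∈ G p2,
      nrm (x1 - x2) ≤ κ * pd p1 p2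

/-- The matrix `(I_n | 0_{n×|D|})`. -/
noncomputable def projMat (n : ℕ) {m : ℕ} (D : Finset (Fin m)) :
    Matrix (Fin n) (Fin n ⊕ D) ℝ :=
  Matrix.fromCols 1 0

/-- Operator norm of a matrix from `(ℝ^ι, ‖·‖_∞)` to `(ℝⁿ, nrm)`. -/
noncomputable def opNormInf (nrm : (Fin n → ℝ) → ℝ) {ι : Type} [Fintype ι]
    (B : Matrix (Fin n) ι ℝ) : ℝ :=
  sSup {r | ∃ v : ι → ℝ, ‖v‖ ≤ 1 ∧ r = nrm (B.mulVec v)}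

/-- Operator norm of a matrix from `(ℝⁿ × ℝ^ι, max {‖·‖_*, ‖·‖_∞})` to `(ℝⁿ, nrm)`. -/
noncomputable def opNormMixed (nrm : (Fin n → ℝ) → ℝ) {ι : Type} [Fintype ι]
    (B : Matrix (Fin n) (Fin n ⊕ ι) ℝ) : ℝ :=
  sSup {r | ∃ (α : Fin n → ℝ) (β : ι → ℝ), dualNrm nrm α ≤ 1 ∧ ‖β‖ ≤ 1 ∧
    r = nrm (B.mulVec (Sum.elim α β))}


/-- The matrix `A_Dᵀ (A_D A_Dᵀ)⁻¹`, which is the two-sided inverse of `A_D` whenever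
`A_D` is square and invertible. -/
noncomputable def pinvA (A : Matrix (Fin m) (Fin n) ℝ) (D : Finset (Fin m)) :
    Matrix (Fin n) D ℝ :=
  (subA A D)ᵀ * ((subA A D) * (subA A D)ᵀ)⁻¹

end QPLip

open QPLip

namespace QPLip
variable {n m : ℕ}
variable {nrm : (Fin n → ℝ) → ℝ}


lemma IsNorm.zero (h : IsNorm nrm) : nrm 0 = 0 := by
  have := h.smul 0 0; simpa using this

lemma IsNorm.neg (h : IsNorm nrm) (x : Fin n → ℝ) : nrm (-x) = nrm x := by
  have := h.smul (-1) x; simpa using this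

lemma IsNorm.nonneg (h : IsNorm nrm) (x : Fin n → ℝ) : 0 ≤ nrm x := by
  have t := h.triangle x (-x)
  rw [add_neg_cancel, h.zero, h.neg] at t
  linarith

lemma IsNorm.sum_le (h : IsNorm nrm) {ι : Type*} (s : Finset ι) (f : ι → Fin n → ℝ) :
    nrm (∑ i ∈ s, f i) ≤ ∑ i ∈ s, nrm (f i) := by
  classical
  induction s using Finset.induction with
  | empty => simp [h.zero]
  | insert _ _ hi ih =>
    rw [Finset.sum_insert hi, Finset.sum_insert hi]
    exact le_trans (h.triangle _ _) (by linarith)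

lemma IsNorm.upper (h : IsNorm nrm) :
    ∃ K : ℝ, 0 ≤ K ∧ ∀ x, nrm x ≤ K * ‖x‖ := by
  refine ⟨∑ i : Fin n, nrm (fun j => if i = j then 1 else 0),
    Finset.sum_nonneg fun i _ => h.nonneg _, fun x => ?_⟩
  have hx : x = ∑ i : Fin n, x i • fun j => if i = j then (1:ℝ) else 0 := pi_eq_sum_univ x
  have step1 : nrm x ≤ ∑ i : Fin n, nrm (x i • fun j => if i = j then (1:ℝ) else 0) := by
    conv_lhs => rw [hx]
    exact h.sum_le _ _
  refine step1.trans ?_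
  rw [Finset.sum_mul]
  refine Finset.sum_le_sum fun i _ => ?_
  rw [h.smul, mul_comm]
  have h1 : |x i| ≤ ‖x‖ := by
    have := norm_le_pi_norm x i
    simpa [Real.norm_eq_abs] using this
  exact mul_le_mul_of_nonneg_left h1 (h.nonneg _)


lemma IsNorm.cont (h : IsNorm nrm) : Continuous nrm := by
  obtain ⟨K, hK0, hK⟩ := h.upper
  refine (LipschitzWith.of_dist_le_mul (K := ⟨K, hK0⟩) fun x y => ?_).continuous
  have t1 : nrm x ≤ nrm y + nrm (x - y) := by
    have := h.triangle y (x - y); simpa using this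
  have t2 : nrm y ≤ nrm x + nrm (y - x) := by
    have := h.triangle x (y - x); simpa using this
  have hxy : nrm (y - x) = nrm (x - y) := by
    rw [← h.neg (x - y)]; congr 1; abel
  rw [Real.dist_eq, dist_eq_norm]
  have := hK (x - y)
  rw [abs_le]
  change -(K * ‖x - y‖) ≤ nrm x - nrm y ∧ nrm x - nrm y ≤ K * ‖x - y‖
  constructor <;> nlinarith [h.nonneg (x - y)]

lemma IsNorm.lower (hn : 0 < n) (h : IsNorm nrm) :
    ∃ cl : ℝ, 0 < cl ∧ ∀ x, cl * ‖x‖ ≤ nrm x := by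
  haveI : Nonempty (Fin n) := Fin.pos_iff_nonempty.mp hn
  have hne : ((fun _ => (1:ℝ)) : Fin n → ℝ) ∈ Metric.sphere (0 : Fin n → ℝ) 1 := by
    simp [mem_sphere_zero_iff_norm]
  obtain ⟨x0, hx0mem, hx0min⟩ := (isCompact_sphere (0 : Fin n → ℝ) 1).exists_isMinOn
    ⟨_, hne⟩ h.cont.continuousOn
  have hx0norm : ‖x0‖ = 1 := mem_sphere_zero_iff_norm.mp hx0mem
  have hx0ne : x0 ≠ 0 := by intro h0; rw [h0] at hx0norm; simp at hx0norm
  have hcl : 0 < nrm x0 :=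
    lt_of_le_of_ne (h.nonneg x0) (fun e => hx0ne (h.definite x0 e.symm))
  refine ⟨nrm x0, hcl, fun x => ?_⟩
  rcases eq_or_ne x 0 with rfl | hx
  · simp [h.zero]
  · have hxn : ‖x‖ ≠ 0 := norm_ne_zero_iff.mpr hx
    have hu : ‖x‖⁻¹ • x ∈ Metric.sphere (0 : Fin n → ℝ) 1 := by
      simp [mem_sphere_zero_iff_norm, norm_smul, abs_of_nonneg (inv_nonneg.mpr (norm_nonneg x)),
        inv_mul_cancel₀ hxn]
    have hmin := hx0min hu
    have hrw : nrm x = ‖x‖ * nrm (‖x‖⁻¹ • x) := by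
      have hs := h.smul ‖x‖ (‖x‖⁻¹ • x)
      rw [smul_smul, mul_inv_cancel₀ hxn, one_smul, abs_of_nonneg (norm_nonneg x)] at hs
      exact hs
    rw [hrw, mul_comm (nrm x0) (‖x‖)]
    exact mul_le_mul_of_nonneg_left hmin (norm_nonneg x)

end QPLip

namespace QPAux
open QPLip
variable {n m : ℕ}
variable {nrm : (Fin n → ℝ) → ℝ}

lemma dualNrm_le (hnrm : IsNorm nrm) {cl : ℝ} (hcl0 : 0 < cl)
    (hcl : ∀ x, cl * ‖x‖ ≤ nrm x) (v : Fin n → ℝ) :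
    dualNrm nrm v ≤ ((n : ℝ) / cl) * ‖v‖ := by
  apply Real.sSup_le
  · rintro r ⟨y, hy, rfl⟩
    have hyn : ‖y‖ ≤ 1 / cl := by
      have h1 := hcl y
      rw [le_div_iff₀ hcl0, mul_comm]
      linarith
    calc |v ⬝ᵥ y| ≤ ∑ j, |v j * y j| := Finset.abs_sum_le_sum_abs _ _
      _ ≤ ∑ _j : Fin n, ‖v‖ * (1 / cl) := by
          refine Finset.sum_le_sum fun j _ => ?_
          rw [abs_mul]
          have h1 : |v j| ≤ ‖v‖ := by simpa [Real.norm_eq_abs] using norm_le_pi_norm v j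
          have h2 : |y j| ≤ 1 / cl := le_trans (by simpa [Real.norm_eq_abs] using norm_le_pi_norm y j) hyn
          exact mul_le_mul h1 h2 (abs_nonneg _) (norm_nonneg _)
      _ = ((n : ℝ) / cl) * ‖v‖ := by
          rw [Finset.sum_const, Finset.card_univ, Fintype.card_fin, nsmul_eq_mul]
          ring
  · positivity

lemma obj_convex {Q : Matrix (Fin n) (Fin n) ℝ} (hQ : Q.PosSemidef) (c z y : Fin n → ℝ)
    {t : ℝ} (ht0 : 0 ≤ t) (ht1 : t ≤ 1) :
    obj Q c (z + t • (y - z)) ≤ obj Q c z + t * (obj Q c y - obj Q c z) := by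
  set d := y - z with hd
  have hy : y = z + d := by rw [hd]; abel
  have hentry : ∀ i j, Q j i = Q i j := by
    intro i j
    have h1 := congrFun (congrFun hQ.1 i) j
    simpa [Matrix.conjTranspose_apply] using h1
  have hsym : ∀ u w : Fin n → ℝ, u ⬝ᵥ Q *ᵥ w = w ⬝ᵥ Q *ᵥ u := by
    intro u w
    simp only [dotProduct, Matrix.mulVec, dotProduct, Finset.mul_sum]
    rw [Finset.sum_comm]
    refine Finset.sum_congr rfl fun j _ => Finset.sum_congr rfl fun i _ => ?_
    rw [hentry j i]; ring
  have hpsd : 0 ≤ d ⬝ᵥ Q *ᵥ d := by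
    have := hQ.dotProduct_mulVec_nonneg d
    simpa using this
  have e1 : obj Q c (z + t • d) = obj Q c z + t * (z ⬝ᵥ Q *ᵥ d) + (1/2)*(t^2)*(d ⬝ᵥ Q *ᵥ d)
      + t * (c ⬝ᵥ d) := by
    simp only [obj, Matrix.mulVec_add, Matrix.mulVec_smul, dotProduct_add, add_dotProduct,
      dotProduct_smul, smul_dotProduct, smul_eq_mul, hsym d z]
    ring
  have e2 : obj Q c y = obj Q c z + (z ⬝ᵥ Q *ᵥ d) + (1/2)*(d ⬝ᵥ Q *ᵥ d) + (c ⬝ᵥ d) := by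
    rw [hy]
    simp only [obj, Matrix.mulVec_add, Matrix.mulVec_smul, dotProduct_add, add_dotProduct,
      dotProduct_smul, smul_dotProduct, smul_eq_mul, hsym d z]
    ring
  rw [e1, e2]
  nlinarith [mul_nonneg (mul_nonneg ht0 (sub_nonneg.mpr ht1)) hpsd]

set_option maxHeartbeats 1600000 in
lemma transfer {n m : ℕ} (hn : 0 < n) (hm : 0 < m)
    {nrm : (Fin n → ℝ) → ℝ} (hnrm : IsNorm nrm)
    {Q : Matrix (Fin n) (Fin n) ℝ} (hQ : Q.PosSemidef)
    (A : Matrix (Fin m) (Fin n) ℝ) (cb : Fin n → ℝ) (bb : Fin m → ℝ) (xb : Fin n → ℝ)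
    (hfeas : xb ∈ Feas A bb) (D : Finset (Fin m)) {κ : ℝ}
    (hκ : 0 ≤ κ ∧ ∃ V ∈ 𝓝 (cb, bb), ∃ U ∈ 𝓝 xb,
      ∀ p1 ∈ V, ∀ p2 ∈ V, ∀ x2 ∈ argminSet Q A p2.1 p2.2 ∩ U,
        dSet nrm x2 (argminSet Q A p1.1 p1.2) ≤ ENNReal.ofReal (κ * pDist nrm p2 p1)) :
    0 ≤ κ ∧ ∃ V ∈ 𝓝 (cb, restr bb D), ∃ U ∈ 𝓝 xb,
      ∀ p1 ∈ V, ∀ p2 ∈ V, ∀ x2 ∈ argminD Q A D p2.1 p2.2 ∩ U,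
        dSet nrm x2 (argminD Q A D p1.1 p1.2) ≤ ENNReal.ofReal (κ * pDist nrm p2 p1) := by
  classical
  obtain ⟨hκ0, V, hV, U, hU, hP⟩ := hκ
  refine ⟨hκ0, ?_⟩
  obtain ⟨cl, hcl0, hcl⟩ := hnrm.lower hn
  obtain ⟨ε, hε, hballV⟩ := Metric.mem_nhds_iff.mp hV
  obtain ⟨δU, hδU, hballU⟩ := Metric.mem_nhds_iff.mp hU
  set ρ : ℝ := ε / 2 with hρdef
  have hρ : 0 < ρ := by positivity
  set M : ℝ := (∑ i, ∑ j, |A i j|) + 1 with hMdef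
  have hM0 : 0 < M := by positivity
  have hAv : ∀ i (v : Fin n → ℝ), |A i ⬝ᵥ v| ≤ M * ‖v‖ := by
    intro i v
    calc |A i ⬝ᵥ v| ≤ ∑ j, |A i j * v j| := Finset.abs_sum_le_sum_abs _ _
      _ ≤ ∑ j, |A i j| * ‖v‖ := by
          refine Finset.sum_le_sum fun j _ => ?_
          rw [abs_mul]
          exact mul_le_mul_of_nonneg_left
            (by simpa [Real.norm_eq_abs] using norm_le_pi_norm v j) (abs_nonneg _)
      _ = (∑ j, |A i j|) * ‖v‖ := by rw [Finset.sum_mul]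
      _ ≤ M * ‖v‖ := by
          refine mul_le_mul_of_nonneg_right ?_ (norm_nonneg v)
          have h1 : (∑ j, |A i j|) ≤ ∑ i, ∑ j, |A i j| :=
            Finset.single_le_sum (f := fun i => ∑ j, |A i j|)
              (fun i _ => Finset.sum_nonneg fun _ _ => abs_nonneg _) (Finset.mem_univ i)
          simp only [hMdef]; linarith
  set δ2 : ℝ := min (ρ / M) δU with hδ2def
  have hδ20 : 0 < δ2 := lt_min (by positivity) hδU
  have hnear : ∀ x : Fin n → ℝ, ‖x - xb‖ < δ2 → ∀ i, i ∉ D → A i ⬝ᵥ x < bb i + ρ := by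
    intro x hx i _
    have h1 : A i ⬝ᵥ x = A i ⬝ᵥ xb + A i ⬝ᵥ (x - xb) := by
      rw [← dotProduct_add]
      congr 1
      abel
    have h2 := (abs_le.mp (hAv i (x - xb))).2
    have h3 : M * ‖x - xb‖ < M * δ2 := mul_lt_mul_of_pos_left hx hM0
    have h4 : M * δ2 ≤ ρ := by
      have h5 : δ2 ≤ ρ / M := min_le_left _ _
      calc M * δ2 ≤ M * (ρ / M) := mul_le_mul_of_nonneg_left h5 hM0.le
        _ = ρ := by field_simp
    have h5 := hfeas i
    rw [h1]
    linarith
  set K : ℝ := (n : ℝ) / cl with hKdef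
  have hK0 : 0 ≤ K := by positivity
  have hdual : ∀ v, dualNrm nrm v ≤ K * ‖v‖ := dualNrm_le hnrm hcl0 hcl
  set r : ℝ := min (ε / 2) (cl * δ2 / (8 * (K + 1) * (κ + 1))) with hrdef
  have hden : (0:ℝ) < 8 * (K + 1) * (κ + 1) := by nlinarith [hK0, hκ0]
  have hr0 : 0 < r := lt_min (by positivity) (div_pos (by nlinarith [mul_pos hcl0 hδ20]) hden)
  have hrε : r ≤ ε / 2 := min_le_left _ _
  have hr2' : r ≤ cl * δ2 / (8 * (K + 1) * (κ + 1)) := min_le_right _ _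
  have hδ2U : δ2 ≤ δU := min_le_right _ _
  clear_value ρ M δ2 K r
  refine ⟨Metric.ball (cb, restr bb D) r, Metric.ball_mem_nhds _ hr0,
    Metric.ball xb (δ2 / 2), Metric.ball_mem_nhds _ (by linarith), ?_⟩
  set lift : (↥D → ℝ) → Fin m → ℝ :=
    fun β i => if h : i ∈ D then β ⟨i, h⟩ else bb i + ρ with hliftdef
  have hmemV : ∀ p : (Fin n → ℝ) × (↥D → ℝ), p ∈ Metric.ball (cb, restr bb D) r →
      (p.1, lift p.2) ∈ V := by
    intro p hp
    apply hballV
    rw [Metric.mem_ball, Prod.dist_eq, max_lt_iff] at hp ⊢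
    refine ⟨hp.1.trans_le (by linarith), ?_⟩
    rw [dist_eq_norm, pi_norm_lt_iff hε]
    intro i
    by_cases hiD : i ∈ D
    · have h2 : dist (p.2 ⟨i, hiD⟩) (restr bb D ⟨i, hiD⟩) ≤ dist p.2 (restr bb D) :=
        dist_le_pi_dist _ _ _
      have h3 : dist (p.2 ⟨i, hiD⟩) (restr bb D ⟨i, hiD⟩) < r := lt_of_le_of_lt h2 hp.2
      simp only [Pi.sub_apply, Real.norm_eq_abs, hliftdef, dif_pos hiD]
      rw [Real.dist_eq] at h3
      simp only [restr] at h3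
      calc |p.2 ⟨i, hiD⟩ - bb i| < r := h3
        _ < ε := by linarith
    · simp only [Pi.sub_apply, Real.norm_eq_abs, hliftdef, dif_neg hiD]
      rw [show bb i + ρ - bb i = ρ by ring, abs_of_pos hρ]
      linarith
  intro p1 hp1 p2 hp2 x2 hx2
  obtain ⟨hx2S, hx2U⟩ := hx2
  rw [Metric.mem_ball, dist_eq_norm] at hx2U
  have hx2near : ‖x2 - xb‖ < δ2 / 2 := hx2U
  have hx2full : x2 ∈ argminSet Q A p2.1 (lift p2.2) := by
    constructor
    · intro i
      by_cases hiD : i ∈ D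
      · have := hx2S.1 ⟨i, hiD⟩
        simpa [hliftdef, dif_pos hiD] using this
      · have := hnear x2 (by linarith) i hiD
        simp only [hliftdef, dif_neg hiD]
        linarith
    · intro y hy
      apply hx2S.2
      intro i
      have := hy i.1
      simpa [hliftdef, dif_pos i.2] using this
  have hpd0 : 0 ≤ pDist nrm p2 p1 := le_trans (norm_nonneg _) (le_max_right _ _)
  have hpdmono : pDist nrm (p2.1, lift p2.2) (p1.1, lift p1.2) ≤ pDist nrm p2 p1 := by
    refine max_le_max le_rfl ?_
    refine (pi_norm_le_iff_of_nonneg (norm_nonneg _)).mpr fun i => ?_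
    by_cases hiD : i ∈ D
    · have h1 : ((lift p2.2 - lift p1.2) i) = (p2.2 - p1.2) ⟨i, hiD⟩ := by
        simp [hliftdef, dif_pos hiD]
      rw [show ‖(lift p2.2 - lift p1.2) i‖ = ‖(p2.2 - p1.2) ⟨i, hiD⟩‖ by rw [h1]]
      exact norm_le_pi_norm _ _
    · have h1 : ((lift p2.2 - lift p1.2) i) = 0 := by
        simp [hliftdef, dif_neg hiD]
      rw [h1]
      simp
  have hpdsmall : κ * pDist nrm p2 p1 ≤ cl * δ2 / 4 := by
    rw [Metric.mem_ball, Prod.dist_eq, max_lt_iff] at hp1 hp2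
    have h1 : ‖p2.1 - p1.1‖ ≤ 2 * r := by
      calc ‖p2.1 - p1.1‖ = dist p2.1 p1.1 := (dist_eq_norm _ _).symm
        _ ≤ dist p2.1 cb + dist cb p1.1 := dist_triangle _ _ _
        _ = dist p2.1 cb + dist p1.1 cb := by rw [dist_comm cb p1.1]
        _ ≤ 2 * r := by linarith [hp1.1, hp2.1]
    have h2 : ‖p2.2 - p1.2‖ ≤ 2 * r := by
      calc ‖p2.2 - p1.2‖ = dist p2.2 p1.2 := (dist_eq_norm _ _).symm
        _ ≤ dist p2.2 (restr bb D) + dist (restr bb D) p1.2 := dist_triangle _ _ _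
        _ = dist p2.2 (restr bb D) + dist p1.2 (restr bb D) := by rw [dist_comm (restr bb D) p1.2]
        _ ≤ 2 * r := by linarith [hp1.2, hp2.2]
    have h3 : pDist nrm p2 p1 ≤ 2 * (K + 1) * r := by
      refine max_le ?_ ?_
      · calc dualNrm nrm (p2.1 - p1.1) ≤ K * ‖p2.1 - p1.1‖ := hdual _
          _ ≤ K * (2 * r) := mul_le_mul_of_nonneg_left h1 hK0
          _ ≤ 2 * (K + 1) * r := by nlinarith
      · calc ‖p2.2 - p1.2‖ ≤ 2 * r := h2
          _ ≤ 2 * (K + 1) * r := by nlinarith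
    have hr2 : r ≤ cl * δ2 / (8 * (K + 1) * (κ + 1)) := hr2'
    have h4 : κ * pDist nrm p2 p1 ≤ κ * (2 * (K + 1) * r) :=
      mul_le_mul_of_nonneg_left h3 hκ0
    have h5 : r * (8 * (K + 1) * (κ + 1)) ≤ cl * δ2 := by
      exact (le_div_iff₀ hden).mp hr2
    have h6 : 0 ≤ 2 * (K + 1) * r := by positivity
    have h7 : κ * (2 * (K + 1) * r) ≤ (κ + 1) * (2 * (K + 1) * r) :=
      mul_le_mul_of_nonneg_right (by linarith) h6
    have h8 : (κ + 1) * (2 * (K + 1) * r) = r * (8 * (K + 1) * (κ + 1)) / 4 := by ring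
    linarith
  apply ENNReal.le_of_forall_pos_le_add
  intro ε' hε' _
  set s : ℝ := min ((ε' : ℝ)) (cl * δ2 / 4) with hsdef
  have hs0 : 0 < s := lt_min (by exact_mod_cast hε') (by nlinarith [mul_pos hcl0 hδ20])
  have hsε : s ≤ (ε' : ℝ) := min_le_left _ _
  have hs2 : s ≤ cl * δ2 / 4 := min_le_right _ _
  clear_value s
  have hx2Ufull : x2 ∈ U := by
    apply hballU
    rw [Metric.mem_ball, dist_eq_norm]
    linarith
  have hfullAubin := hP _ (hmemV p1 hp1) _ (hmemV p2 hp2) x2 ⟨hx2full, hx2Ufull⟩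
  have hpos : 0 < κ * pDist nrm p2 p1 + s := by nlinarith [mul_nonneg hκ0 hpd0]
  have hlt1 : dSet nrm x2 (argminSet Q A p1.1 (lift p1.2)) ≤
      ENNReal.ofReal (κ * pDist nrm p2 p1) :=
    hfullAubin.trans (ENNReal.ofReal_le_ofReal (mul_le_mul_of_nonneg_left hpdmono hκ0))
  have hlt : dSet nrm x2 (argminSet Q A p1.1 (lift p1.2)) <
      ENNReal.ofReal (κ * pDist nrm p2 p1 + s) :=
    lt_of_le_of_lt hlt1 ((ENNReal.ofReal_lt_ofReal_iff hpos).mpr (by linarith))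
  obtain ⟨z, hzS, hzlt⟩ : ∃ z ∈ argminSet Q A p1.1 (lift p1.2),
      ENNReal.ofReal (nrm (x2 - z)) < ENNReal.ofReal (κ * pDist nrm p2 p1 + s) := by
    simp only [dSet, iInf_lt_iff] at hlt
    obtain ⟨z, hz, hlt'⟩ := hlt
    exact ⟨z, hz, hlt'⟩
  have hnrmlt : nrm (x2 - z) < κ * pDist nrm p2 p1 + s := by
    by_contra hcon
    push_neg at hcon
    exact absurd hzlt (not_lt.mpr (ENNReal.ofReal_le_ofReal hcon))
  have hdistz : ‖x2 - z‖ < δ2 / 2 := by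
    have h1 := hcl (x2 - z)
    have h2 : s ≤ cl * δ2 / 4 := hs2
    have h3 : nrm (x2 - z) < cl * (δ2 / 2) := by nlinarith
    nlinarith
  have hz_near : ‖z - xb‖ < δ2 := by
    have h1 : z - xb = -(x2 - z) + (x2 - xb) := by abel
    calc ‖z - xb‖ ≤ ‖-(x2 - z)‖ + ‖x2 - xb‖ := by rw [h1]; exact norm_add_le _ _
      _ = ‖x2 - z‖ + ‖x2 - xb‖ := by rw [norm_neg]
      _ < δ2 := by linarith
  obtain ⟨hzF, hzOpt⟩ := hzS
  have hzD : z ∈ argminD Q A D p1.1 p1.2 := by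
    constructor
    · intro i
      have := hzF i.1
      simpa [hliftdef, dif_pos i.2] using this
    · intro y hy
      by_contra hcon
      push_neg at hcon
      haveI : Nonempty (Fin m) := Fin.pos_iff_nonempty.mp hm
      set g : ℝ := Finset.univ.inf' Finset.univ_nonempty
        (fun i => if i ∈ D then 1 else bb i + ρ - A i ⬝ᵥ z) with hgdef
      have hg0 : 0 < g := by
        rw [hgdef, Finset.lt_inf'_iff]
        intro i _
        by_cases hiD : i ∈ D
        · simp [hiD]
        · simp only [hiD, if_false]
          have := hnear z hz_near i hiD
          linarith
      have hgle : ∀ i, i ∉ D → g ≤ bb i + ρ - A i ⬝ᵥ z := by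
        intro i hiD
        have h := Finset.inf'_le (fun i => if i ∈ D then (1:ℝ) else bb i + ρ - A i ⬝ᵥ z)
          (Finset.mem_univ i)
        rw [if_neg hiD] at h
        exact h
      set C : ℝ := M * ‖y - z‖ + 1 with hCdef
      have hC0 : 0 < C := by nlinarith [mul_nonneg hM0.le (norm_nonneg (y - z))]
      have hCb : ∀ i, |A i ⬝ᵥ (y - z)| ≤ C := fun i => (hAv i _).trans (by simp [hCdef])
      set t : ℝ := min 1 (g / C) with htdef
      have ht0 : 0 < t := lt_min one_pos (div_pos hg0 hC0)
      have ht1 : t ≤ 1 := min_le_left _ _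
      have htC : t * C ≤ g := by
        have h1 : t ≤ g / C := min_le_right _ _
        calc t * C ≤ (g / C) * C := mul_le_mul_of_nonneg_right h1 hC0.le
          _ = g := by field_simp
      have hwF : z + t • (y - z) ∈ Feas A (lift p1.2) := by
        intro i
        have hlin : A i ⬝ᵥ (z + t • (y - z)) = A i ⬝ᵥ z + t * (A i ⬝ᵥ (y - z)) := by
          rw [dotProduct_add, dotProduct_smul, smul_eq_mul]
        have hsub : A i ⬝ᵥ (y - z) = A i ⬝ᵥ y - A i ⬝ᵥ z := dotProduct_sub _ _ _
        by_cases hiD : i ∈ D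
        · have hz_i : A i ⬝ᵥ z ≤ p1.2 ⟨i, hiD⟩ := by
            have := hzF i
            simpa [hliftdef, dif_pos hiD] using this
          have hy_i : A i ⬝ᵥ y ≤ p1.2 ⟨i, hiD⟩ := hy ⟨i, hiD⟩
          rw [hlin, hsub]
          simp only [hliftdef, dif_pos hiD]
          nlinarith
        · rw [hlin]
          simp only [hliftdef, dif_neg hiD]
          have h2 : t * (A i ⬝ᵥ (y - z)) ≤ t * C :=
            mul_le_mul_of_nonneg_left (le_trans (le_abs_self _) (hCb i)) ht0.le
          have h3 := hgle i hiD
          linarith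
      have hobj := obj_convex hQ p1.1 z y ht0.le ht1
      have hzw := hzOpt _ hwF
      nlinarith
  have hle1 : dSet nrm x2 (argminD Q A D p1.1 p1.2) ≤ ENNReal.ofReal (nrm (x2 - z)) :=
    iInf₂_le z hzD
  calc dSet nrm x2 (argminD Q A D p1.1 p1.2) ≤ ENNReal.ofReal (nrm (x2 - z)) := hle1
    _ ≤ ENNReal.ofReal (κ * pDist nrm p2 p1 + s) := ENNReal.ofReal_le_ofReal hnrmlt.le
    _ ≤ ENNReal.ofReal (κ * pDist nrm p2 p1) + ENNReal.ofReal s := ENNReal.ofReal_add_le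
    _ ≤ ENNReal.ofReal (κ * pDist nrm p2 p1) + ε' := by
        gcongr
        rw [← ENNReal.ofReal_coe_nnreal]
        exact ENNReal.ofReal_le_ofReal hsε


end QPAux

open QPLip


/-- under SCQ at `b̄`, `lip S((c̄,b̄),x̄) ≥ lip S_D((c̄,b̄_D),x̄)` for every
`D ∈ M_{c̄,b̄}(x̄)`; in particular `lip S ≥ max_D lip S_D`, and if some `S_D` fails the
Aubin property then so does `S`. -/
theorem statement6 {n m : ℕ} (hn : 0 < n) (hm : 0 < m)
    (nrm : (Fin n → ℝ) → ℝ) (hnrm : IsNorm nrm)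
    (Q : Matrix (Fin n) (Fin n) ℝ) (hQ : Q.PosSemidef)
    (A : Matrix (Fin m) (Fin n) ℝ) (cb : Fin n → ℝ) (bb : Fin m → ℝ) (xb : Fin n → ℝ)
    (hx : xb ∈ argminSet Q A cb bb) (hSl : Slater A bb) :
    (∀ D ∈ MinKKT Q A cb bb xb,
      lipMod nrm (fun p q => pDist nrm p q) (fun p : (Fin n → ℝ) × (D → ℝ) => argminD Q A D p.1 p.2) (cb, restr bb D) xb ≤
        lipMod nrm (fun p q => pDist nrm p q) (fun p : (Fin n → ℝ) × (Fin m → ℝ) => argminSet Q A p.1 p.2) (cb, bb) xb) ∧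
    (⨆ D ∈ MinKKT Q A cb bb xb, lipMod nrm (fun p q => pDist nrm p q) (fun p : (Fin n → ℝ) × (D → ℝ) => argminD Q A D p.1 p.2) (cb, restr bb D) xb) ≤
      lipMod nrm (fun p q => pDist nrm p q) (fun p : (Fin n → ℝ) × (Fin m → ℝ) => argminSet Q A p.1 p.2) (cb, bb) xb ∧
    (∀ D ∈ MinKKT Q A cb bb xb,
      ¬ AubinAt nrm (fun p q => pDist nrm p q) (fun p : (Fin n → ℝ) × (D → ℝ) => argminD Q A D p.1 p.2) (cb, restr bb D) xb →
        ¬ AubinAt nrm (fun p q => pDist nrm p q) (fun p : (Fin n → ℝ) × (Fin m → ℝ) => argminSet Q A p.1 p.2) (cb, bb) xb) := by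
  have hfeas : xb ∈ Feas A bb := hx.1
  have tr : ∀ (D : Finset (Fin m)) {κ : ℝ},
      (0 ≤ κ ∧ ∃ V ∈ 𝓝 (cb, bb), ∃ U ∈ 𝓝 xb,
        ∀ p1 ∈ V, ∀ p2 ∈ V, ∀ x2 ∈ argminSet Q A p2.1 p2.2 ∩ U,
          dSet nrm x2 (argminSet Q A p1.1 p1.2) ≤ ENNReal.ofReal (κ * pDist nrm p2 p1)) →
      (0 ≤ κ ∧ ∃ V ∈ 𝓝 (cb, restr bb D), ∃ U ∈ 𝓝 xb,
        ∀ p1 ∈ V, ∀ p2 ∈ V, ∀ x2 ∈ argminD Q A D p2.1 p2.2 ∩ U,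
          dSet nrm x2 (argminD Q A D p1.1 p1.2) ≤ ENNReal.ofReal (κ * pDist nrm p2 p1)) :=
    fun D _ h => QPAux.transfer hn hm hnrm hQ A cb bb xb hfeas D h
  have key : ∀ D : Finset (Fin m),
      lipMod nrm (fun p q => pDist nrm p q)
        (fun p : (Fin n → ℝ) × (↥D → ℝ) => argminD Q A D p.1 p.2) (cb, restr bb D) xb ≤
      lipMod nrm (fun p q => pDist nrm p q)
        (fun p : (Fin n → ℝ) × (Fin m → ℝ) => argminSet Q A p.1 p.2) (cb, bb) xb := by
    intro D
    refine le_iInf₂ fun κ hκ => iInf₂_le κ ?_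
    exact tr D hκ
  refine ⟨fun D _ => key D, iSup₂_le fun D _ => key D, fun D _ hnA hA => hnA ?_⟩
  obtain ⟨κ, hκ⟩ := hA
  exact ⟨κ, tr D hκ⟩
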